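/- If S is a subset of vertices of a graph G with no even cycles and G[S] admits a perfect matching, then this perfect matching of G[S] is unique. -/

import Mathlib

open Polynomial

variable {V : Type*}

/-- `M` (a finite set of edges) is a matching of the graph `G`:
its members are edges of `G` and no two distinct members share an endpoint. -/
def IsGraphMatching (G : SimpleGraph V) (M : Finset (Sym2 V)) : Prop :=
  (M : Set (Sym2 V)) ⊆ G.edgeSet ∧
    ∀ e ∈ M, ∀ f ∈ M, e ≠ f → ∀ x, x ∈ e → x ∉ f

/-- The set of vertices covered by the edge set `M` is exactly `S`. -/
def Covers (M : Finset (Sym2 V)) (S : Finset V) : Prop :=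
  ∀ x, x ∈ S ↔ ∃ e ∈ M, x ∈ e

/-- `M` is a perfect matching of the induced subgraph `G[S]`. -/
def IsPerfectMatchingOn (G : SimpleGraph V) (M : Finset (Sym2 V)) (S : Finset V) : Prop :=
  IsGraphMatching G M ∧ Covers M S

/-- `S` is a perfectly matchable set of `G`. -/
def IsPMS (G : SimpleGraph V) (S : Finset V) : Prop :=
  ∃ M, IsPerfectMatchingOn G M S

open Classical in
/-- The perfectly matchable set polynomial of the subgraph of `G` induced on the
ground vertex set `A`: the generating function `∑ p_{2k} z^k` where `p_{2k}` is the number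
of perfectly matchable sets `S ⊆ A` with `|S| = 2k`. -/
noncomputable def pmPoly [Fintype V] (G : SimpleGraph V) (A : Finset V) : Polynomial ℤ :=
  ∑ S ∈ A.powerset, if IsPMS G S then X ^ (S.card / 2) else 0

/-- `G` has no cycle of even length. -/
def NoEvenCycle (G : SimpleGraph V) : Prop :=
  ∀ (v : V) (c : G.Walk v v), c.IsCycle → ¬ Even c.length

namespace Stmt1Aux

variable {G : SimpleGraph V} {S : Finset V} {M : Finset (Sym2 V)}

lemma partner_unique (hM : IsGraphMatching G M) {x y y' : V}
    (h1 : s(x, y) ∈ M) (h2 : s(x, y') ∈ M) : y = y' := by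
  by_contra hne
  have hne' : s(x, y) ≠ s(x, y') := fun h => hne (Sym2.congr_right.mp h)
  exact hM.2 _ h1 _ h2 hne' x (Sym2.mem_mk_left x y) (Sym2.mem_mk_left x y')

open Classical in
noncomputable def pt (M : Finset (Sym2 V)) (x : V) : V :=
  if h : ∃ y, s(x, y) ∈ M then h.choose else x

lemma pt_mem (hM : IsPerfectMatchingOn G M S) {x : V} (hx : x ∈ S) :
    s(x, pt M x) ∈ M := by
  obtain ⟨e, he, hxe⟩ := (hM.2 x).1 hx
  obtain ⟨y, rfl⟩ := Sym2.mem_iff_exists.mp hxe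
  have h : ∃ y, s(x, y) ∈ M := ⟨y, he⟩
  rw [pt, dif_pos h]
  exact h.choose_spec

lemma pt_eq (hM : IsPerfectMatchingOn G M S) {x y : V} (h : s(x, y) ∈ M) :
    pt M x = y := by
  have hx : x ∈ S := (hM.2 x).2 ⟨_, h, Sym2.mem_mk_left x y⟩
  exact partner_unique hM.1 (pt_mem hM hx) h

lemma pt_adj (hM : IsPerfectMatchingOn G M S) {x : V} (hx : x ∈ S) :
    G.Adj x (pt M x) := (SimpleGraph.mem_edgeSet G).mp (hM.1.1 (pt_mem hM hx))

lemma pt_mem_S (hM : IsPerfectMatchingOn G M S) {x : V} (hx : x ∈ S) :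
    pt M x ∈ S := (hM.2 _).2 ⟨_, pt_mem hM hx, Sym2.mem_mk_right x _⟩

lemma pt_pt (hM : IsPerfectMatchingOn G M S) {x : V} (hx : x ∈ S) :
    pt M (pt M x) = x := pt_eq hM (Sym2.eq_swap ▸ pt_mem hM hx)

noncomputable def walkSeg (G : SimpleGraph V) (f : ℕ → V)
    (hadj : ∀ n, G.Adj (f n) (f (n + 1))) (a : ℕ) : (n : ℕ) → G.Walk (f a) (f (a + n))
  | 0 => SimpleGraph.Walk.nil
  | n + 1 => (walkSeg G f hadj a n).concat (hadj (a + n))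

lemma walkSeg_support (G : SimpleGraph V) (f : ℕ → V)
    (hadj : ∀ n, G.Adj (f n) (f (n + 1))) (a : ℕ) (n : ℕ) :
    (walkSeg G f hadj a n).support = (List.range (n + 1)).map (fun k => f (a + k)) := by
  induction n with
  | zero => rw [List.range_succ]; simp [walkSeg]
  | succ n ih => simp [walkSeg, ih, List.range_succ]

lemma walkSeg_edges (G : SimpleGraph V) (f : ℕ → V)
    (hadj : ∀ n, G.Adj (f n) (f (n + 1))) (a : ℕ) (n : ℕ) {e : Sym2 V}
    (he : e ∈ (walkSeg G f hadj a n).edges) :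
    ∃ k < n, e = s(f (a + k), f (a + k + 1)) := by
  induction n with
  | zero => simp [walkSeg] at he
  | succ n ih =>
    simp only [walkSeg, SimpleGraph.Walk.edges_concat, List.concat_eq_append,
      List.mem_append, List.mem_singleton] at he
    rcases he with he | he
    · obtain ⟨k, hk, hek⟩ := ih he
      exact ⟨k, Nat.lt_succ_of_lt hk, hek⟩
    · exact ⟨n, Nat.lt_succ_self n, he⟩

lemma walkSeg_length (G : SimpleGraph V) (f : ℕ → V)
    (hadj : ∀ n, G.Adj (f n) (f (n + 1))) (a : ℕ) (n : ℕ) :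
    (walkSeg G f hadj a n).length = n := by
  induction n with
  | zero => simp [walkSeg]
  | succ n ih => simp [walkSeg, ih]

lemma no_disagree {M' : Finset (Sym2 V)} (hG : NoEvenCycle G)
    (hM : IsPerfectMatchingOn G M S) (hM' : IsPerfectMatchingOn G M' S)
    {x : V} (hx : x ∈ S) (hd : pt M x ≠ pt M' x) : False := by
  classical
  set f : ℕ → V := fun n => Nat.rec x (fun k xk => if Even k then pt M xk else pt M' xk) n
    with hfdef
  have hfs : ∀ n, f (n + 1) = if Even n then pt M (f n) else pt M' (f n) := fun n => rfl
  have hf0 : f 0 = x := rfl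
  have hkey : ∀ n, f n ∈ S ∧ pt M (f n) ≠ pt M' (f n) := by
    intro n
    induction n with
    | zero => exact ⟨hx, hd⟩
    | succ n ih =>
      obtain ⟨hmem, hdis⟩ := ih
      by_cases hev : Even n
      · have h1 : f (n + 1) = pt M (f n) := by rw [hfs, if_pos hev]
        have hmem' : f (n + 1) ∈ S := h1 ▸ pt_mem_S hM hmem
        refine ⟨hmem', fun hagree => hdis ?_⟩
        have h2 : pt M (f (n + 1)) = f n := by rw [h1, pt_pt hM hmem]
        have h3 : pt M' (f (n + 1)) = f n := by rw [← hagree, h2]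
        have h4 : s(f n, f (n + 1)) ∈ M' := by
          have h5 := pt_mem hM' hmem'
          rw [h3] at h5
          exact Sym2.eq_swap ▸ h5
        rw [pt_eq hM' h4]
        exact h1.symm
      · have h1 : f (n + 1) = pt M' (f n) := by rw [hfs, if_neg hev]
        have hmem' : f (n + 1) ∈ S := h1 ▸ pt_mem_S hM' hmem
        refine ⟨hmem', fun hagree => hdis ?_⟩
        have h2 : pt M' (f (n + 1)) = f n := by rw [h1, pt_pt hM' hmem]
        have h3 : pt M (f (n + 1)) = f n := by rw [hagree, h2]
        have h4 : s(f n, f (n + 1)) ∈ M := by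
          have h5 := pt_mem hM hmem'
          rw [h3] at h5
          exact Sym2.eq_swap ▸ h5
        rw [pt_eq hM h4]
        exact h1
  have hfS : ∀ n, f n ∈ S := fun n => (hkey n).1
  have hfd : ∀ n, pt M (f n) ≠ pt M' (f n) := fun n => (hkey n).2
  have hadj : ∀ n, G.Adj (f n) (f (n + 1)) := by
    intro n
    rw [hfs]
    by_cases hev : Even n
    · rw [if_pos hev]; exact pt_adj hM (hfS n)
    · rw [if_neg hev]; exact pt_adj hM' (hfS n)
  have hrevM : ∀ n, Even n → pt M (f (n + 1)) = f n := fun n h => by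
    rw [hfs, if_pos h, pt_pt hM (hfS n)]
  have hrevM' : ∀ n, ¬Even n → pt M' (f (n + 1)) = f n := fun n h => by
    rw [hfs, if_neg h, pt_pt hM' (hfS n)]
  have hnb : ∀ n, f (n + 2) ≠ f n := by
    intro n h
    by_cases hev : Even n
    · apply hfd (n + 1)
      have h2 : f (n + 2) = pt M' (f (n + 1)) := by
        rw [hfs (n + 1), if_neg (by simp [Nat.even_add_one, hev])]
      rw [hrevM n hev, ← h2]
      exact h.symm
    · apply hfd (n + 1)
      have h2 : f (n + 2) = pt M (f (n + 1)) := by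
        rw [hfs (n + 1), if_pos (by simp [Nat.even_add_one, hev])]
      rw [hrevM' n hev, ← h2]
      exact h
  have hne1 : ∀ n, f (n + 1) ≠ f n := fun n => (hadj n).ne'
  have hex : ∃ j, ∃ i, i < j ∧ f i = f j := by
    have h2 : ¬ Function.Injective
        (fun k : Fin (S.card + 1) => (⟨f k, hfS k⟩ : {a // a ∈ S})) := by
      intro hinj
      have h3 := Fintype.card_le_of_injective _ hinj
      simp only [Fintype.card_coe, Fintype.card_fin] at h3
      omega
    rw [Function.not_injective_iff] at h2
    obtain ⟨a, b, hab, hne⟩ := h2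
    have hab' : f ↑a = f ↑b := congrArg Subtype.val hab
    rcases lt_or_gt_of_ne hne with h | h
    · exact ⟨↑b, ↑a, h, hab'⟩
    · exact ⟨↑a, ↑b, h, hab'.symm⟩
  obtain ⟨i, hij, hfij⟩ := Nat.find_spec hex
  set j := Nat.find hex with hjdef
  have hmin : ∀ j' < j, ¬∃ i, i < j' ∧ f i = f j' := fun j' h => Nat.find_min hex h
  have hinj : ∀ a b, a < j → b < j → f a = f b → a = b := by
    intro a b ha hb h
    rcases lt_trichotomy a b with hl | he | hl
    · exact absurd ⟨a, hl, h⟩ (hmin b hb)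
    · exact he
    · exact absurd ⟨b, hl, h.symm⟩ (hmin a ha)
  have hi0 : i = 0 := by
    by_contra h0
    obtain ⟨i', rfl⟩ : ∃ i', i = i' + 1 := ⟨i - 1, by omega⟩
    obtain ⟨j'', hjj⟩ : ∃ j'', j = j'' + 1 := ⟨j - 1, by omega⟩
    rw [hjj] at hfij hij
    have hiltj : i' < j'' := by omega
    by_cases hpar : Even i' ↔ Even j''
    · have heq : f i' = f j'' := by
        by_cases he : Even i'
        · rw [← hrevM i' he, ← hrevM j'' (hpar.mp he), hfij]
        · rw [← hrevM' i' he, ← hrevM' j'' (fun hc => he (hpar.mpr hc)), hfij]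
      exact hmin j'' (by omega) ⟨i', hiltj, heq⟩
    · have hpar2 : Even (i' + 1) ↔ Even j'' := by
        simp only [Nat.even_add_one]; tauto
      have h16 : f (i' + 1 + 1) = f j'' := by
        by_cases he : Even (i' + 1)
        · rw [hfs (i' + 1), if_pos he, hfij, hrevM j'' (hpar2.mp he)]
        · rw [hfs (i' + 1), if_neg he, hfij,
            hrevM' j'' (fun hc => he (hpar2.mpr hc))]
      rcases Nat.lt_trichotomy (i' + 2) j'' with hc | hc | hc
      · exact hmin j'' (by omega) ⟨i' + 2, hc, h16⟩
      · rw [← hc] at hfij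
        exact hnb (i' + 1) hfij.symm
      · have hje : j'' = i' + 1 := by omega
        rw [hje] at h16
        exact hne1 (i' + 1) h16
  rw [hi0] at hfij
  have hfj : f j = f 0 := hfij.symm
  have hj0 : 0 < j := by omega
  have hjne1 : j ≠ 1 := by
    intro h
    have h2 := hfj
    rw [h] at h2
    exact hne1 0 h2
  have hjne2 : j ≠ 2 := by
    intro h
    have h2 := hfj
    rw [h] at h2
    exact hnb 0 h2
  have hj3 : 3 ≤ j := by omega
  have hjeven : Even j := by
    by_contra hodd
    obtain ⟨j'', hjj⟩ : ∃ t, j = t + 1 := ⟨j - 1, by omega⟩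
    have hev : Even j'' := by
      rw [hjj, Nat.even_add_one] at hodd
      exact not_not.mp hodd
    have h1 : f j'' = f 1 := by
      have hone : f 1 = pt M (f 0) := by
        have h2 := hfs 0
        rw [if_pos Even.zero] at h2
        exact h2
      rw [← hrevM j'' hev, ← hjj, hfj, ← hone]
    have hne0 : j'' ≠ 0 := fun h => hne1 0 (by rw [h] at h1; exact h1.symm)
    have hneo : j'' ≠ 1 := fun h => by omega
    exact hmin j'' (by omega) ⟨1, by omega, h1.symm⟩
  have hj4 : 4 ≤ j := by
    obtain ⟨t, ht⟩ := hjeven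
    omega
  have hend : f (1 + (j - 1)) = f 0 := by
    rw [show 1 + (j - 1) = j by omega]
    exact hfj
  set p : G.Walk (f 1) (f 0) := (walkSeg G f hadj 1 (j - 1)).copy rfl hend with hpdef
  have hps : p.IsPath := by
    rw [SimpleGraph.Walk.isPath_def]
    have hsup : p.support = (List.range (j - 1 + 1)).map (fun k => f (1 + k)) := by
      rw [hpdef, SimpleGraph.Walk.support_copy]
      exact walkSeg_support G f hadj 1 (j - 1)
    rw [hsup]
    refine List.Nodup.map_on ?_ List.nodup_range
    intro a ha b hb hfab
    rw [List.mem_range] at ha hb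
    by_cases haj : 1 + a < j <;> by_cases hbj : 1 + b < j
    · have := hinj (1 + a) (1 + b) haj hbj hfab; omega
    · have hbj' : 1 + b = j := by omega
      rw [hbj', hfj] at hfab
      have := hinj 0 (1 + a) (by omega) haj hfab.symm
      omega
    · have haj' : 1 + a = j := by omega
      rw [haj', hfj] at hfab
      have := hinj 0 (1 + b) (by omega) hbj hfab
      omega
    · omega
  have hedge : s(f 0, f 1) ∉ p.edges := by
    intro hmem
    rw [hpdef, SimpleGraph.Walk.edges_copy] at hmem
    obtain ⟨k, hk, hek⟩ := walkSeg_edges G f hadj 1 (j - 1) hmem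
    rw [Sym2.eq_iff] at hek
    rcases hek with ⟨h1, h2⟩ | ⟨h1, h2⟩
    · have := hinj 0 (1 + k) (by omega) (by omega) h1
      omega
    · by_cases hkk : 1 + k + 1 < j
      · have := hinj 0 (1 + k + 1) (by omega) hkk h1
        omega
      · have hkk' : 1 + k + 1 = j := by omega
        have := hinj 1 (1 + k) (by omega) (by omega) h2
        omega
  have hcyc := SimpleGraph.Path.cons_isCycle ⟨p, hps⟩ (hadj 0) hedge
  have hlen : (SimpleGraph.Walk.cons (hadj 0) p).length = j := by
    rw [SimpleGraph.Walk.length_cons, hpdef, SimpleGraph.Walk.length_copy,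
      walkSeg_length]
    omega
  exact hG (f 0) _ hcyc (hlen ▸ hjeven)

end Stmt1Aux

/-- in a graph with no even cycles, a perfect matching of an induced
subgraph `G[S]` is unique when it exists. -/
theorem stmt1 (G : SimpleGraph V) (hG : NoEvenCycle G) (S : Finset V)
    (M M' : Finset (Sym2 V))
    (hM : IsPerfectMatchingOn G M S) (hM' : IsPerfectMatchingOn G M' S) :
    M = M' := by
  have hpt : ∀ x ∈ S, Stmt1Aux.pt M x = Stmt1Aux.pt M' x := fun x hx =>
    by_contra fun h => (Stmt1Aux.no_disagree hG hM hM' hx h).elim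
  have key : ∀ (N N' : Finset (Sym2 V)), IsPerfectMatchingOn G N S →
      IsPerfectMatchingOn G N' S →
      (∀ x ∈ S, Stmt1Aux.pt N x = Stmt1Aux.pt N' x) → N ⊆ N' := by
    intro N N' hN hN' hp e he
    obtain ⟨x, y, rfl⟩ : ∃ x y, e = s(x, y) := by
      induction e using Sym2.inductionOn with
      | hf x y => exact ⟨x, y, rfl⟩
    have hx : x ∈ S := (hN.2 x).2 ⟨_, he, Sym2.mem_mk_left x y⟩
    have h1 : Stmt1Aux.pt N x = y := Stmt1Aux.pt_eq hN he
    have h2 := Stmt1Aux.pt_mem hN' hx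
    rw [← hp x hx, h1] at h2
    exact h2
  exact Finset.Subset.antisymm (key M M' hM hM' hpt)
    (key M' M hM' hM (fun x hx => (hpt x hx).symm))
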